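/- Suppose λ ∈ K is not equal to −p for any positive integer p. Then for every integer n > m, the kernel of D(n) equals the image of D(n−m−1), on both the even and the odd parts; that is, the cohomology H^{n+2}(d_λ) vanishes for all n > m. -/
import Mathlib


namespace LinfCohomology

variable {K : Type*} [Field K] [CharZero K]

/- Cochain conventions: for `n ≥ 0`, the even part of `C(n)` has coordinates
`E1,…,E6` (for `φ^{1,0,n+1}_1, φ^{1,0,n+1}_2, φ^{0,1,n+1}_1, φ^{0,1,n+1}_2,
φ^{0,0,n+2}_3, φ^{1,1,n}_3`) and the odd part has coordinates `O1,…,O6` (for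
`ψ^{1,0,n+1}_3, ψ^{0,1,n+1}_3, ψ^{0,0,n+2}_1, ψ^{0,0,n+2}_2, ψ^{1,1,n}_1,
ψ^{1,1,n}_2`); `C(-1)` has even coordinates `E1,…,E5` and odd `O1,…,O4`. -/

/-- The even part of the coboundary operator `D(n)` of
`d_λ = ψ^{0,1,m+1}_3 + λψ^{1,1,m}_1`, for `n ≥ 0`:
`E1 ↦ -(n+1)O5`, `E2 ↦ -O1+(λ-n-1)O6`, `E3 ↦ 0`, `E4 ↦ -O2-λO5`,
`E5 ↦ (n+1-m)O2-λmO5`, `E6 ↦ 0`. -/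
def De (m : ℕ) (lam : K) (n : ℕ) : (Fin 6 → K) →ₗ[K] (Fin 6 → K) :=
  Matrix.mulVecLin
    !![0, -1, 0, 0, 0, 0;
       0, 0, 0, -1, (n : K) + 1 - (m : K), 0;
       0, 0, 0, 0, 0, 0;
       0, 0, 0, 0, 0, 0;
       -((n : K) + 1), 0, 0, -lam, -(lam * (m : K)), 0;
       0, lam - (n : K) - 1, 0, 0, 0, 0]

/-- The odd part of the coboundary operator `D(n)` of `d_λ`, for `n ≥ 0`:
`O1 ↦ (λ+m-n)E6`, `O2 ↦ 0`, `O3 ↦ (λ+n+2)E3`, `O4 ↦ -λE1+(n+2)E4+E5`,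
`O5 ↦ 0`, `O6 ↦ E6`. -/
def Do (m : ℕ) (lam : K) (n : ℕ) : (Fin 6 → K) →ₗ[K] (Fin 6 → K) :=
  Matrix.mulVecLin
    !![0, 0, 0, -lam, 0, 0;
       0, 0, 0, 0, 0, 0;
       0, 0, lam + (n : K) + 2, 0, 0, 0;
       0, 0, 0, (n : K) + 2, 0, 0;
       0, 0, 0, 1, 0, 0;
       lam + (m : K) - (n : K), 0, 0, 0, 0, 1]

/-- The even part of `D(-1)` of `d_λ` (on degree-1 cochains):
`E1 ↦ 0`, `E2 ↦ -O1+λO6`, `E3 ↦ 0`, `E4 ↦ -O2-λO5`, `E5 ↦ -mO2-λmO5`. -/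
def DeNeg1 (m : ℕ) (lam : K) : (Fin 5 → K) →ₗ[K] (Fin 6 → K) :=
  Matrix.mulVecLin
    !![0, -1, 0, 0, 0;
       0, 0, 0, -1, -(m : K);
       0, 0, 0, 0, 0;
       0, 0, 0, 0, 0;
       0, 0, 0, -lam, -(lam * (m : K));
       0, lam, 0, 0, 0]

/-- The odd part of `D(-1)` of `d_λ` (on degree-1 cochains):
`O1 ↦ (λ+m+1)E6`, `O2 ↦ 0`, `O3 ↦ (λ+1)E3`, `O4 ↦ -λE1+E4+E5`. -/
def DoNeg1 (m : ℕ) (lam : K) : (Fin 4 → K) →ₗ[K] (Fin 6 → K) :=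
  Matrix.mulVecLin
    !![0, 0, 0, -lam;
       0, 0, 0, 0;
       0, 0, lam + 1, 0;
       0, 0, 0, 1;
       0, 0, 0, 1;
       lam + (m : K) + 1, 0, 0, 0]

private lemma cv0 {α : Type*} (a b c d e f : α) : ![a,b,c,d,e,f] 0 = a := rfl
private lemma cv1 {α : Type*} (a b c d e f : α) : ![a,b,c,d,e,f] 1 = b := rfl
private lemma cv2 {α : Type*} (a b c d e f : α) : ![a,b,c,d,e,f] 2 = c := rfl
private lemma cv3 {α : Type*} (a b c d e f : α) : ![a,b,c,d,e,f] 3 = d := rfl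
private lemma cv4 {α : Type*} (a b c d e f : α) : ![a,b,c,d,e,f] 4 = e := rfl
private lemma cv5 {α : Type*} (a b c d e f : α) : ![a,b,c,d,e,f] 5 = f := rfl

private lemma fm0 (h : 0 < 6) : (⟨0, h⟩ : Fin 6) = 0 := rfl
private lemma fm1 (h : 1 < 6) : (⟨1, h⟩ : Fin 6) = 1 := rfl
private lemma fm2 (h : 2 < 6) : (⟨2, h⟩ : Fin 6) = 2 := rfl
private lemma fm3 (h : 3 < 6) : (⟨3, h⟩ : Fin 6) = 3 := rfl
private lemma fm4 (h : 4 < 6) : (⟨4, h⟩ : Fin 6) = 4 := rfl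
private lemma fm5 (h : 5 < 6) : (⟨5, h⟩ : Fin 6) = 5 := rfl

set_option maxHeartbeats 1000000 in
/-- If `λ` is not a negative integer, then for every `n > m` the kernel of `D(n)`
equals the image of `D(n-m-1)` on both the even and the odd parts: the cohomology
`H^{n+2}(d_λ)` vanishes for all `n > m`. -/
theorem dLam_high_cohomology_vanishes (m : ℕ) (lam : K)
    (hlam : ∀ p : ℕ, 0 < p → lam ≠ -(p : K)) (n : ℕ) (hn : m < n) :
    LinearMap.ker (De m lam n) = LinearMap.range (Do m lam (n - m - 1)) ∧
    LinearMap.ker (Do m lam n) = LinearMap.range (De m lam (n - m - 1)) := by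
  obtain ⟨k, rfl⟩ : ∃ k, n = k + m + 1 := ⟨n - m - 1, by omega⟩
  have hk : k + m + 1 - m - 1 = k := by omega
  rw [hk]
  have hA : ((k : K) + (m : K) + 2) ≠ 0 := by
    have h := (Nat.cast_ne_zero (R := K)).mpr (show k + m + 2 ≠ 0 by omega)
    intro h0; apply h; push_cast; linear_combination h0
  have hC : ((k : K) + 1) ≠ 0 := by
    have h := (Nat.cast_ne_zero (R := K)).mpr (show k + 1 ≠ 0 by omega)
    intro h0; apply h; push_cast; linear_combination h0
  have hB : lam + (k : K) + 2 ≠ 0 := by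
    intro h
    exact hlam (k + 2) (by omega) (by push_cast; linear_combination h)
  have hB' : lam + ((k : K) + (m : K) + 1) + 2 ≠ 0 := by
    intro h
    exact hlam (k + m + 3) (by omega) (by push_cast; linear_combination h)
  have hC' : (1 : K) + (k : K) ≠ 0 := by
    intro h; exact hC (by linear_combination h)
  have hB2 : (2 : K) + lam + (k : K) ≠ 0 := by
    intro h; exact hB (by linear_combination h)
  constructor
  · ext v
    simp only [LinearMap.mem_ker, LinearMap.mem_range, De, Do, Matrix.mulVecLin_apply]
    constructor
    · intro hv
      have h0 := congrFun hv 0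
      have h1 := congrFun hv 1
      have h4 := congrFun hv 4
      simp only [Matrix.mulVec, dotProduct, Matrix.of_apply, Fin.sum_univ_six,
        cv0, cv1, cv2, cv3, cv4, cv5, fm0, fm1, fm2, fm3, fm4, fm5, Pi.zero_apply] at h0 h1 h4
      push_cast at h0 h1 h4
      have hv1 : v 1 = 0 := by linear_combination -h0
      have hv3 : v 3 = ((k : K) + 2) * v 4 := by linear_combination -h1
      have hv0 : v 0 = -(lam * v 4) := by
        apply mul_left_cancel₀ hA
        linear_combination -h4 + lam * h1
      refine ⟨![0, 0, (lam + (k : K) + 2)⁻¹ * v 2, v 4, 0, v 5], ?_⟩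
      funext i
      fin_cases i
      · simp only [Matrix.mulVec, dotProduct, Matrix.of_apply, Fin.sum_univ_six,
          cv0, cv1, cv2, cv3, cv4, cv5, fm0, fm1, fm2, fm3, fm4, fm5, Pi.zero_apply]; push_cast; linear_combination -hv0
      · simp only [Matrix.mulVec, dotProduct, Matrix.of_apply, Fin.sum_univ_six,
          cv0, cv1, cv2, cv3, cv4, cv5, fm0, fm1, fm2, fm3, fm4, fm5, Pi.zero_apply]; push_cast; linear_combination -hv1
      · simp only [Matrix.mulVec, dotProduct, Matrix.of_apply, Fin.sum_univ_six,
          cv0, cv1, cv2, cv3, cv4, cv5, fm0, fm1, fm2, fm3, fm4, fm5, Pi.zero_apply]; push_cast; field_simp <;> ring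
      · simp only [Matrix.mulVec, dotProduct, Matrix.of_apply, Fin.sum_univ_six,
          cv0, cv1, cv2, cv3, cv4, cv5, fm0, fm1, fm2, fm3, fm4, fm5, Pi.zero_apply]; push_cast; linear_combination -hv3
      · simp only [Matrix.mulVec, dotProduct, Matrix.of_apply, Fin.sum_univ_six,
          cv0, cv1, cv2, cv3, cv4, cv5, fm0, fm1, fm2, fm3, fm4, fm5, Pi.zero_apply]; push_cast; ring
      · simp only [Matrix.mulVec, dotProduct, Matrix.of_apply, Fin.sum_univ_six,
          cv0, cv1, cv2, cv3, cv4, cv5, fm0, fm1, fm2, fm3, fm4, fm5, Pi.zero_apply]; push_cast; ring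
    · rintro ⟨w, rfl⟩
      funext i
      fin_cases i <;>
        simp only [Matrix.mulVec, dotProduct, Matrix.of_apply, Fin.sum_univ_six,
          cv0, cv1, cv2, cv3, cv4, cv5, fm0, fm1, fm2, fm3, fm4, fm5, Pi.zero_apply] <;> push_cast <;> ring
  · ext v
    simp only [LinearMap.mem_ker, LinearMap.mem_range, De, Do, Matrix.mulVecLin_apply]
    constructor
    · intro hv
      have h2 := congrFun hv 2
      have h4 := congrFun hv 4
      have h5 := congrFun hv 5
      simp only [Matrix.mulVec, dotProduct, Matrix.of_apply, Fin.sum_univ_six,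
        cv0, cv1, cv2, cv3, cv4, cv5, fm0, fm1, fm2, fm3, fm4, fm5, Pi.zero_apply] at h2 h4 h5
      push_cast at h2 h4 h5
      have hv3 : v 3 = 0 := by linear_combination h4
      have hv2 : v 2 = 0 := by
        have h2' : (lam + ((k : K) + (m : K) + 1) + 2) * v 2 = 0 := by linear_combination h2
        rcases mul_eq_zero.mp h2' with h | h
        · exact absurd h hB'
        · exact h
      have hv5 : v 5 = ((k : K) + 1 - lam) * v 0 := by
        linear_combination h5
      refine ⟨![((k : K) + 1)⁻¹ * (lam * v 1 - v 4), -v 0, 0, -v 1, 0, 0], ?_⟩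
      funext i
      fin_cases i
      · simp only [Matrix.mulVec, dotProduct, Matrix.of_apply, Fin.sum_univ_six,
          cv0, cv1, cv2, cv3, cv4, cv5, fm0, fm1, fm2, fm3, fm4, fm5, Pi.zero_apply]; push_cast; ring
      · simp only [Matrix.mulVec, dotProduct, Matrix.of_apply, Fin.sum_univ_six,
          cv0, cv1, cv2, cv3, cv4, cv5, fm0, fm1, fm2, fm3, fm4, fm5, Pi.zero_apply]; push_cast; ring
      · simp only [Matrix.mulVec, dotProduct, Matrix.of_apply, Fin.sum_univ_six,
          cv0, cv1, cv2, cv3, cv4, cv5, fm0, fm1, fm2, fm3, fm4, fm5, Pi.zero_apply]; push_cast; linear_combination -hv2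
      · simp only [Matrix.mulVec, dotProduct, Matrix.of_apply, Fin.sum_univ_six,
          cv0, cv1, cv2, cv3, cv4, cv5, fm0, fm1, fm2, fm3, fm4, fm5, Pi.zero_apply]; push_cast; linear_combination -hv3
      · simp only [Matrix.mulVec, dotProduct, Matrix.of_apply, Fin.sum_univ_six,
          cv0, cv1, cv2, cv3, cv4, cv5, fm0, fm1, fm2, fm3, fm4, fm5, Pi.zero_apply]; push_cast; field_simp <;> ring
      · simp only [Matrix.mulVec, dotProduct, Matrix.of_apply, Fin.sum_univ_six,
          cv0, cv1, cv2, cv3, cv4, cv5, fm0, fm1, fm2, fm3, fm4, fm5, Pi.zero_apply]; push_cast; linear_combination -hv5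
    · rintro ⟨w, rfl⟩
      funext i
      fin_cases i <;>
        simp only [Matrix.mulVec, dotProduct, Matrix.of_apply, Fin.sum_univ_six,
          cv0, cv1, cv2, cv3, cv4, cv5, fm0, fm1, fm2, fm3, fm4, fm5, Pi.zero_apply] <;> push_cast <;> ring

end LinfCohomology
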